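/- Let L be a finite lattice and K a convex sublattice of L. Then the restriction map re : Con L → Con K, sending a congruence α of L to its restriction α↾K, is a lattice homomorphism preserving the bottom and top elements (i.e., a bounded lattice homomorphism). -/

import Mathlib

/-- A lattice congruence on `L`. -/
structure LatCon (L : Type*) [Lattice L] where
  r : L → L → Prop
  refl : ∀ x, r x x
  symm : ∀ {x y}, r x y → r y x
  trans : ∀ {x y z}, r x y → r y z → r x z
  sup_compat : ∀ {x y} (z : L), r x y → r (x ⊔ z) (y ⊔ z)
  inf_compat : ∀ {x y} (z : L), r x y → r (x ⊓ z) (y ⊓ z)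

namespace LatCon

variable {L : Type*} [Lattice L]

theorem ext' : ∀ {a b : LatCon L}, a.r = b.r → a = b
  | ⟨_, _, _, _, _, _⟩, ⟨_, _, _, _, _, _⟩, rfl => rfl

instance : PartialOrder (LatCon L) where
  le a b := ∀ x y, a.r x y → b.r x y
  le_refl _ _ _ h := h
  le_trans _ _ _ hab hbc x y h := hbc x y (hab x y h)
  le_antisymm a b hab hba := ext' (by
    funext x y
    exact propext ⟨hab x y, hba x y⟩)

instance : InfSet (LatCon L) where
  sInf S :=
    { r := fun x y => ∀ c ∈ S, c.r x y
      refl := fun x c _ => c.refl x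
      symm := fun h c hc => c.symm (h c hc)
      trans := fun h h' c hc => c.trans (h c hc) (h' c hc)
      sup_compat := fun z h c hc => c.sup_compat z (h c hc)
      inf_compat := fun z h c hc => c.inf_compat z (h c hc) }

noncomputable instance : CompleteLattice (LatCon L) :=
  completeLatticeOfInf (LatCon L) (fun S =>
    ⟨fun c hc x y h => h c hc, fun _ hb x y h c hc => hb hc x y h⟩)

/-- Restriction of a congruence of `L` to a sublattice `K`. -/
def restrict (K : Sublattice L) (c : LatCon L) : LatCon K where
  r x y := c.r (x : L) (y : L)
  refl x := c.refl (x : L)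
  symm h := c.symm h
  trans h h' := c.trans h h'
  sup_compat z h := by simpa using c.sup_compat (z : L) h
  inf_compat z h := by simpa using c.inf_compat (z : L) h

end LatCon

namespace LatCon

variable {L : Type*} [Lattice L]

theorem le_def' {a b : LatCon L} : a ≤ b ↔ ∀ x y, a.r x y → b.r x y := Iff.rfl

/-- The congruence generated as reflexive transitive closure of the union of two
congruences. -/
def supCon (α β : LatCon L) : LatCon L where
  r := Relation.ReflTransGen (fun a b => α.r a b ∨ β.r a b)
  refl _ := Relation.ReflTransGen.refl
  symm h := by
    haveI : Std.Symm (fun a b => α.r a b ∨ β.r a b) := ⟨fun _ _ h => h.imp α.symm β.symm⟩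
    exact Std.Symm.symm _ _ h
  trans h h' := h.trans h'
  sup_compat z h := Relation.ReflTransGen.lift (fun t => t ⊔ z)
    (fun _ _ h => h.imp (α.sup_compat z) (β.sup_compat z)) _ _ h
  inf_compat z h := Relation.ReflTransGen.lift (fun t => t ⊓ z)
    (fun _ _ h => h.imp (α.inf_compat z) (β.inf_compat z)) _ _ h

/-- The equality congruence. -/
def eqCon : LatCon L where
  r := Eq
  refl _ := rfl
  symm h := h.symm
  trans h h' := h.trans h'
  sup_compat z h := by rw [h]
  inf_compat z h := by rw [h]

theorem sup_r_iff (α β : LatCon L) (x y : L) :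
    (α ⊔ β).r x y ↔ Relation.ReflTransGen (fun a b => α.r a b ∨ β.r a b) x y := by
  constructor
  · intro h
    have hle : α ⊔ β ≤ supCon α β := by
      apply sup_le
      · exact fun a b hab => Relation.ReflTransGen.single (Or.inl hab)
      · exact fun a b hab => Relation.ReflTransGen.single (Or.inr hab)
    exact hle x y h
  · intro h
    induction h with
    | refl => exact (α ⊔ β).refl x
    | tail _ hstep ih =>
        exact (α ⊔ β).trans ih (hstep.elim
          (fun h' => (le_sup_left : α ≤ α ⊔ β) _ _ h')
          (fun h' => (le_sup_right : β ≤ α ⊔ β) _ _ h'))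

end LatCon

theorem restriction_is_bounded_lattice_hom {L : Type*} [Lattice L] [Finite L]
    (K : Sublattice L) (hconv : ∀ a b x : L, a ∈ K → b ∈ K → a ≤ x → x ≤ b → x ∈ K) :
    (∀ α β : LatCon L, LatCon.restrict K (α ⊔ β) = LatCon.restrict K α ⊔ LatCon.restrict K β) ∧
    (∀ α β : LatCon L, LatCon.restrict K (α ⊓ β) = LatCon.restrict K α ⊓ LatCon.restrict K β) ∧
    LatCon.restrict K (⊥ : LatCon L) = ⊥ ∧
    LatCon.restrict K (⊤ : LatCon L) = ⊤ := by
  refine ⟨?_, ?_, ?_, ?_⟩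
  · -- sup
    intro α β
    apply le_antisymm
    · intro x y h
      -- h : (α ⊔ β).r ↑x ↑y
      have hm : (↑x ⊓ ↑y : L) ∈ K := K.infClosed x.2 y.2
      have hj : (↑x ⊔ ↑y : L) ∈ K := K.supClosed x.2 y.2
      set m : L := ↑x ⊓ ↑y with hmdef
      set j : L := ↑x ⊔ ↑y with hjdef
      have hfmem : ∀ z : L, (z ⊔ m) ⊓ j ∈ K := fun z =>
        hconv m j _ hm hj (le_inf le_sup_right (inf_le_left.trans le_sup_left)) inf_le_right
      set f : L → K := fun z => ⟨(z ⊔ m) ⊓ j, hfmem z⟩ with hfdef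
      have hchain := (LatCon.sup_r_iff α β (↑x) (↑y)).1 h
      have hchain' : Relation.ReflTransGen
          (fun a b : K => (LatCon.restrict K α).r a b ∨ (LatCon.restrict K β).r a b)
          (f ↑x) (f ↑y) := by
        refine Relation.ReflTransGen.lift f (fun a b hab => ?_) _ _ hchain
        exact hab.imp (fun h' => α.inf_compat j (α.sup_compat m h'))
          (fun h' => β.inf_compat j (β.sup_compat m h'))
      have hfx : f ↑x = x := by
        apply Subtype.ext
        show ((↑x : L) ⊔ m) ⊓ j = ↑x
        rw [hmdef, hjdef, sup_inf_self, inf_sup_self]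
      have hfy : f ↑y = y := by
        apply Subtype.ext
        show ((↑y : L) ⊔ m) ⊓ j = ↑y
        rw [hmdef, hjdef, inf_comm (↑x : L) (↑y : L), sup_inf_self,
          sup_comm (↑x : L) (↑y : L), inf_sup_self]
      rw [hfx, hfy] at hchain'
      exact (LatCon.sup_r_iff (LatCon.restrict K α) (LatCon.restrict K β) x y).2 hchain'
    · apply sup_le
      · exact fun x y h => (le_sup_left : α ≤ α ⊔ β) _ _ h
      · exact fun x y h => (le_sup_right : β ≤ α ⊔ β) _ _ h
  · -- inf
    intro α β
    apply LatCon.ext'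
    funext x y
    apply propext
    constructor
    · intro h c hc
      rcases hc with rfl | hc
      · exact h α (Or.inl rfl)
      · rw [Set.mem_singleton_iff] at hc
        subst hc
        exact h β (Or.inr rfl)
    · intro h c hc
      rcases hc with rfl | hc
      · exact h (LatCon.restrict K c) (Or.inl rfl)
      · rw [Set.mem_singleton_iff] at hc
        subst hc
        exact h (LatCon.restrict K c) (Or.inr rfl)
  · -- bot
    apply le_antisymm
    · intro x y h
      -- h : (⊥ : LatCon L).r ↑x ↑y, i.e. ∀ c ∈ univ, c.r ↑x ↑y
      have : (↑x : L) = ↑y := h (LatCon.eqCon) (Set.mem_univ _)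
      have hxy : x = y := Subtype.ext this
      subst hxy
      intro c _
      exact c.refl x
    · exact bot_le
  · -- top
    apply le_antisymm
    · exact le_top
    · intro x y _ c hc
      exact absurd hc (Set.notMem_empty c)
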